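/- Define f̃(θ) = (-2sin θ / (1 + 4sin⁴θ)) · ((π/2 - θ)cos(2θ)cos θ + cos(2θ)sin θ + (π/2)(cos²(2θ) + 2sin²θ)) for θ ∈ (0, π). Then f̃(θ) < 0 for all θ ∈ (0, π). -/
import Mathlib


open Real

/-- The quantity f̃(θ) determining the sign of Re(c₁(0)) for the proportionally fair
dual algorithm is negative on (0, π). -/
theorem f_tilde_negative (θ : ℝ) (h0 : 0 < θ) (hπ : θ < Real.pi) :
    (-2 * Real.sin θ / (1 + 4 * Real.sin θ ^ 4)) *
      ((Real.pi / 2 - θ) * Real.cos (2 * θ) * Real.cos θ +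
        Real.cos (2 * θ) * Real.sin θ +
        Real.pi / 2 * (Real.cos (2 * θ) ^ 2 + 2 * Real.sin θ ^ 2)) < 0 := by
  have hs : 0 < Real.sin θ := Real.sin_pos_of_pos_of_lt_pi h0 hπ
  have hs1 : Real.sin θ ≤ 1 := Real.sin_le_one θ
  have hpyth : Real.sin θ ^ 2 + Real.cos θ ^ 2 = 1 := Real.sin_sq_add_cos_sq θ
  have hc2 : Real.cos (2 * θ) = 1 - 2 * Real.sin θ ^ 2 := by
    rw [Real.cos_two_mul]; nlinarith [hpyth]
  have hpi : Real.pi > 3.141592 := Real.pi_gt_d6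
  have hpi' : Real.pi < 3.15 := Real.pi_lt_d2
  have hden : (0:ℝ) < 1 + 4 * Real.sin θ ^ 4 := by positivity
  have hnum : -2 * Real.sin θ / (1 + 4 * Real.sin θ ^ 4) < 0 := by
    apply div_neg_of_neg_of_pos _ hden; linarith
  have hbracket : 0 < (Real.pi / 2 - θ) * Real.cos (2 * θ) * Real.cos θ +
        Real.cos (2 * θ) * Real.sin θ +
        Real.pi / 2 * (Real.cos (2 * θ) ^ 2 + 2 * Real.sin θ ^ 2) := by
    rcases le_or_gt 0 (Real.cos (2 * θ)) with hcp | hcn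
    · have hsign : 0 ≤ (Real.pi / 2 - θ) * Real.cos θ := by
        rcases le_or_gt θ (Real.pi / 2) with hle | hgt
        · have : 0 ≤ Real.cos θ := Real.cos_nonneg_of_mem_Icc ⟨by linarith, hle⟩
          nlinarith
        · have : Real.cos θ ≤ 0 :=
            Real.cos_nonpos_of_pi_div_two_le_of_le (le_of_lt hgt) (by linarith)
          nlinarith
      nlinarith [mul_nonneg hcp hsign, mul_nonneg hcp hs.le,
        sq_nonneg (Real.cos (2*θ))]
    · have hθ1 : Real.pi / 4 < θ := by
        by_contra h
        push_neg at h
        have : 0 ≤ Real.cos (2 * θ) :=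
          Real.cos_nonneg_of_mem_Icc ⟨by linarith, by linarith⟩
        linarith
      have hθ2 : θ < 3 * Real.pi / 4 := by
        by_contra h
        push_neg at h
        have : 0 ≤ Real.cos (2 * θ - 2 * Real.pi) :=
          Real.cos_nonneg_of_mem_Icc ⟨by linarith, by linarith⟩
        rw [Real.cos_sub_two_pi] at this
        linarith
      have hco2 : Real.cos θ ^ 2 ≤ 1 / 2 := by nlinarith
      have hs2 : 1 / 2 ≤ Real.sin θ ^ 2 := by nlinarith
      have hq : 0 < (θ - Real.pi / 4) * (3 * Real.pi / 4 - θ) := by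
        apply mul_pos <;> linarith
      nlinarith [sq_nonneg ((Real.pi/2 - θ) * Real.cos θ + Real.cos (2*θ)),
        sq_nonneg (Real.pi/2 - θ), hq, sq_nonneg (Real.cos (2*θ) + 1/2),
        mul_nonneg (sq_nonneg (Real.pi/2 - θ)) (sq_nonneg (Real.cos θ)),
        mul_le_of_le_one_right (neg_nonneg.2 hcn.le) hs1]
  exact mul_neg_of_neg_of_pos hnum hbracket
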